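/- Let A be an associative unital F-algebra containing a U_q(su(2)) triple K, K⁻¹, J₊, J₋. Define the conjugate components t̄₁ = −J₋K, t̄₀ = c⁻¹(s⁻¹ J₊J₋ − s J₋J₊), t̄₋₁ = J₊K (equivalently t̄_A = (−1)^{1−A} s^A t_{−A}). Then t̄ transforms as a vector under the coadjoint action of U_{q⁻¹}(su(2)), i.e. with the antipode S̄(K) = K⁻¹, S̄(J±) = −s^{∓1}J±: (i) K⁻¹ t̄_A K = s^A t̄_A for A = −1, 0, 1; (ii) K⁻¹ t̄₋₁ J₊ − s⁻¹ J₊ t̄₋₁ K⁻¹ = 0, K⁻¹ t̄₀ J₊ − s⁻¹ J₊ t̄₀ K⁻¹ = c·t̄₋₁, and K⁻¹ t̄₁ J₊ − s⁻¹ J₊ t̄₁ K⁻¹ = c·t̄₀; (iii) K⁻¹ t̄₁ J₋ − s J₋ t̄₁ K⁻¹ = 0, K⁻¹ t̄₀ J₋ − s J₋ t̄₀ K⁻¹ = c·t̄₁, and K⁻¹ t̄₋₁ J₋ − s J₋ t̄₋₁ K⁻¹ = c·t̄₀. -/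

import Mathlib

/-!
STATEMENT 5: the conjugate triple t̄ transforms as a vector under the coadjoint
action of U_{q⁻¹}(su(2)).
-/

variable {F : Type} [Field F] {A : Type} [Ring A] [Algebra F A]

set_option maxHeartbeats 2000000 in
theorem tbar_is_coadjoint_vector_qinv (s c : F) (hs : s ≠ 0) (hs' : s - s⁻¹ ≠ 0)
    (hc : c ≠ 0) (hc2 : c ^ 2 = s + s⁻¹)
    (K Ki Jp Jm : A)
    (hKKi : K * Ki = 1) (hKiK : Ki * K = 1)
    (hp : K * Jp * Ki = s • Jp) (hm : K * Jm * Ki = s⁻¹ • Jm)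
    (hcomm : Jp * Jm - Jm * Jp = (s - s⁻¹)⁻¹ • (K ^ 2 - Ki ^ 2))
    (tb1 tb0 tbm1 : A)
    (htb1 : tb1 = -(Jm * K))
    (htb0 : tb0 = c⁻¹ • (s⁻¹ • (Jp * Jm) - s • (Jm * Jp)))
    (htbm1 : tbm1 = Jp * K) :
    -- (i) action of K
    (Ki * tb1 * K = s • tb1 ∧ Ki * tb0 * K = tb0 ∧ Ki * tbm1 * K = s⁻¹ • tbm1) ∧
    -- (ii) coadjoint (q⁻¹) action of J₊
    (Ki * tbm1 * Jp - s⁻¹ • (Jp * tbm1 * Ki) = 0 ∧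
     Ki * tb0 * Jp - s⁻¹ • (Jp * tb0 * Ki) = c • tbm1 ∧
     Ki * tb1 * Jp - s⁻¹ • (Jp * tb1 * Ki) = c • tb0) ∧
    -- (iii) coadjoint (q⁻¹) action of J₋
    (Ki * tb1 * Jm - s • (Jm * tb1 * Ki) = 0 ∧
     Ki * tb0 * Jm - s • (Jm * tb0 * Ki) = c • tb1 ∧
     Ki * tbm1 * Jm - s • (Jm * tbm1 * Ki) = c • tb0) := by
  have h1 : K * Jp = s • (Jp * K) := by
    have := congrArg (· * K) hp
    simpa [mul_assoc, hKiK, smul_mul_assoc] using this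
  have h2 : K * Jm = s⁻¹ • (Jm * K) := by
    have := congrArg (· * K) hm
    simpa [mul_assoc, hKiK, smul_mul_assoc] using this
  have h1i : Ki * Jp = s⁻¹ • (Jp * Ki) := by
    have := congrArg (fun x => Ki * x * Ki) h1
    simp only [← mul_assoc, hKiK, one_mul, mul_smul_comm, smul_mul_assoc] at this
    rw [mul_assoc, hKKi, mul_one] at this
    rw [this, smul_smul, inv_mul_cancel₀ hs, one_smul]
  have h2i : Ki * Jm = s • (Jm * Ki) := by
    have := congrArg (fun x => Ki * x * Ki) h2
    simp only [← mul_assoc, hKiK, one_mul, mul_smul_comm, smul_mul_assoc] at this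
    rw [mul_assoc, hKKi, mul_one] at this
    rw [this, smul_smul, mul_inv_cancel₀ hs, one_smul]
  -- rewrite system
  have KJp : ∀ x : A, K * (Jp * x) = s • (Jp * (K * x)) := fun x => by
    rw [← mul_assoc, h1, smul_mul_assoc, mul_assoc]
  have KJm : ∀ x : A, K * (Jm * x) = s⁻¹ • (Jm * (K * x)) := fun x => by
    rw [← mul_assoc, h2, smul_mul_assoc, mul_assoc]
  have KiJp : ∀ x : A, Ki * (Jp * x) = s⁻¹ • (Jp * (Ki * x)) := fun x => by
    rw [← mul_assoc, h1i, smul_mul_assoc, mul_assoc]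
  have KiJm : ∀ x : A, Ki * (Jm * x) = s • (Jm * (Ki * x)) := fun x => by
    rw [← mul_assoc, h2i, smul_mul_assoc, mul_assoc]
  have KKi : ∀ x : A, K * (Ki * x) = x := fun x => by rw [← mul_assoc, hKKi, one_mul]
  have KiK : ∀ x : A, Ki * (K * x) = x := fun x => by rw [← mul_assoc, hKiK, one_mul]
  have hJJ : Jm * Jp = Jp * Jm - (s - s⁻¹)⁻¹ • (K * K - Ki * Ki) := by
    rw [pow_two, pow_two] at hcomm
    rw [← hcomm]; abel
  have JmJpx : ∀ x : A, Jm * (Jp * x)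
      = Jp * (Jm * x) - (s - s⁻¹)⁻¹ • (K * (K * x) - Ki * (Ki * x)) := fun x => by
    rw [← mul_assoc, hJJ, sub_mul, smul_mul_assoc, sub_mul, mul_assoc, mul_assoc, mul_assoc]
  have hss : s * s - 1 ≠ 0 := by
    intro h
    apply hs'
    have h2 : s - s⁻¹ = (s * s - 1) / s := by field_simp
    rw [h2, h, zero_div]
  have hc2s : c ^ 2 * s = s ^ 2 + 1 := by
    rw [hc2]; field_simp
  have hd1 : -(c * s ^ 3) + c * s ^ 5 ≠ 0 := by
    have h : -(c * s ^ 3) + c * s ^ 5 = c * s ^ 3 * (s * s - 1) := by ring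
    rw [h]; exact mul_ne_zero (mul_ne_zero hc (pow_ne_zero 3 hs)) hss
  have hd2 : s ^ 2 * c ^ 2 - s ^ 4 * c ^ 2 * 2 + s ^ 6 * c ^ 2 ≠ 0 := by
    have h : s ^ 2 * c ^ 2 - s ^ 4 * c ^ 2 * 2 + s ^ 6 * c ^ 2 = (c * s * (s * s - 1)) ^ 2 := by
      ring
    rw [h]; exact pow_ne_zero 2 (mul_ne_zero (mul_ne_zero hc hs) hss)
  subst htb1 htb0 htbm1
  refine ⟨⟨?_, ?_, ?_⟩, ⟨?_, ?_, ?_⟩, ⟨?_, ?_, ?_⟩⟩ <;>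
  · simp only [mul_assoc, mul_sub, sub_mul, mul_add, add_mul, mul_neg, neg_mul,
      smul_sub, smul_add, smul_neg, smul_smul, mul_smul_comm, smul_mul_assoc,
      mul_one, one_mul, hKKi, hKiK,
      KJp, KJm, KiJp, KiJm, KKi, KiK, JmJpx, hJJ, h1, h2, h1i, h2i]
    try match_scalars
    all_goals try ring1
    all_goals try (field_simp; try rw [div_eq_iff (by simp [hc, hs, hss, mul_ne_zero_iff, show s ^ 2 - 1 ≠ 0 by rw [pow_two]; exact hss])])
    all_goals try ring1
    all_goals
      try (ring_nf; field_simp; try rw [div_eq_iff (by simp [hc, hs, hss, mul_ne_zero_iff])])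
    all_goals try ring1
    all_goals try linear_combination (-(c ^ 3 * (s ^ 2 - 1) ^ 4)) * hc2s
    all_goals try linear_combination (-(s ^ 2 - 1)) * hc2s
    all_goals linear_combination (s ^ 2 - 1) * hc2s
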